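/- Let h(g) be the holomorph of a Lie algebra g with zero center, and let D be a derivation of h(g) vanishing on g. Then for every d ∈ Der(g), writing D(d) = x_d + d_1 with x_d ∈ g and d_1 ∈ Der(g), one has d_1 = −ad_{x_d}. -/

import Mathlib

section HolomorphDef

variable (K : Type*) (L : Type*) [Field K] [LieRing L] [LieAlgebra K L]

/-- The bracket `[(x,d),(y,e)] = ([x,y] + d(y) - e(x), [d,e])` on `g ⊕ Der(g)`. -/
def holoBracket (h h' : L × LieDerivation K L L) : L × LieDerivation K L L :=
  (⁅h.1, h'.1⁆ + h.2 h'.1 - h'.2 h.1, ⁅h.2, h'.2⁆)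

variable {K L}

lemma holoBracket_add_left (x y z : L × LieDerivation K L L) :
    holoBracket K L (x + y) z = holoBracket K L x z + holoBracket K L y z := by
  simp only [holoBracket, Prod.ext_iff, Prod.fst_add, Prod.snd_add, add_lie,
    LieDerivation.coe_add, Pi.add_apply, map_add]
  constructor
  · abel
  · simp [add_lie]

lemma holoBracket_add_right (x y z : L × LieDerivation K L L) :
    holoBracket K L x (y + z) = holoBracket K L x y + holoBracket K L x z := by
  simp only [holoBracket, Prod.ext_iff, Prod.fst_add, Prod.snd_add, lie_add,
    LieDerivation.coe_add, Pi.add_apply, map_add]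
  constructor
  · abel
  · simp [lie_add]

lemma holoBracket_self (x : L × LieDerivation K L L) : holoBracket K L x x = 0 := by
  simp [holoBracket, Prod.ext_iff]

lemma holoBracket_leibniz (x y z : L × LieDerivation K L L) :
    holoBracket K L x (holoBracket K L y z) =
      holoBracket K L (holoBracket K L x y) z + holoBracket K L y (holoBracket K L x z) := by
  simp only [holoBracket, Prod.ext_iff, Prod.fst_add, Prod.snd_add,
    LieDerivation.commutator_apply, map_add, map_sub, lie_add, lie_sub, add_lie, sub_lie,
    LieDerivation.apply_lie_eq_add]
  constructor
  · rw [leibniz_lie x.1 y.1 z.1, ← lie_skew (z.2 x.1) y.1]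
    abel
  · rw [leibniz_lie]

lemma holoBracket_smul (t : K) (x y : L × LieDerivation K L L) :
    holoBracket K L x (t • y) = t • holoBracket K L x y := by
  refine Prod.ext ?_ ?_
  · simp [holoBracket, smul_add, smul_sub]
  · exact lie_smul t x.2 y.2

variable (K L)

/-- The holomorph `h(g) = g ⋊ Der(g)` of a Lie algebra `g`: as a vector space it is
the direct sum `g ⊕ Der(g)`. -/
def Holomorph := L × LieDerivation K L L

namespace Holomorph

instance : AddCommGroup (Holomorph K L) :=
  inferInstanceAs (AddCommGroup (L × LieDerivation K L L))

instance : Module K (Holomorph K L) :=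
  inferInstanceAs (Module K (L × LieDerivation K L L))

instance : LieRing (Holomorph K L) where
  bracket h h' := holoBracket K L h h'
  add_lie := holoBracket_add_left
  lie_add := holoBracket_add_right
  lie_self := holoBracket_self
  leibniz_lie := holoBracket_leibniz

instance : LieAlgebra K (Holomorph K L) where
  lie_smul := holoBracket_smul

variable {K L}

/-- The element `(x, d)` (also written `x + d`) of the holomorph. -/
def mk (x : L) (d : LieDerivation K L L) : Holomorph K L := (x, d)

/-- The `g`-component of an element of the holomorph. -/
def fst (h : Holomorph K L) : L := (show L × LieDerivation K L L from h).1

/-- The `Der(g)`-component of an element of the holomorph. -/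
def snd (h : Holomorph K L) : LieDerivation K L L := (show L × LieDerivation K L L from h).2

@[simp] lemma fst_mk (x : L) (d : LieDerivation K L L) : (mk x d).fst = x := rfl
@[simp] lemma snd_mk (x : L) (d : LieDerivation K L L) : (mk x d).snd = d := rfl

lemma ext {h h' : Holomorph K L} (h1 : h.fst = h'.fst) (h2 : h.snd = h'.snd) : h = h' :=
  Prod.ext h1 h2

/-- The bracket of the holomorph is `[(x,d),(y,e)] = ([x,y] + d(y) - e(x), [d,e])`. -/
lemma bracket_def (x y : L) (d e : LieDerivation K L L) :
    ⁅mk x d, mk y e⁆ = mk (⁅x, y⁆ + d y - e x) ⁅d, e⁆ := rfl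

end Holomorph

end HolomorphDef

/-- Let `g` have zero center and let `D` be a derivation of the holomorph `h(g)`
vanishing on `g`. Writing `D(d) = x_d + d₁` with `x_d ∈ g`, `d₁ ∈ Der(g)`, one has
`d₁ = -ad_{x_d}`. -/
theorem holomorph_derivation_snd_eq_neg_ad (K : Type*) (L : Type*) [Field K] [LieRing L]
    [LieAlgebra K L] (hc : LieAlgebra.center K L = ⊥)
    (D : LieDerivation K (Holomorph K L) (Holomorph K L))
    (hD : ∀ x : L, D (Holomorph.mk x 0) = 0) (d : LieDerivation K L L) :
    (D (Holomorph.mk 0 d)).snd = - LieDerivation.ad K L ((D (Holomorph.mk 0 d)).fst) := by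
  set X := D (Holomorph.mk 0 d) with hX
  ext y
  have h1 : ⁅Holomorph.mk (0:L) d, Holomorph.mk y (0 : LieDerivation K L L)⁆ = Holomorph.mk (d y) (0 : LieDerivation K L L) := by
    rw [Holomorph.bracket_def]
    congr 1
    · simp
    · simp
  have h2 : ⁅X, Holomorph.mk y (0 : LieDerivation K L L)⁆ = (0 : Holomorph K L) := by
    have := D.apply_lie_eq_add (Holomorph.mk (0:L) d) (Holomorph.mk y (0 : LieDerivation K L L))
    rw [h1, hD, hD] at this
    simpa [← hX] using this.symm
  have h3 : X = Holomorph.mk X.fst X.snd := rfl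
  rw [h3, Holomorph.bracket_def] at h2
  have h4 := congrArg Holomorph.fst h2
  simp only [Holomorph.fst_mk] at h4
  have h5 : X.snd y + ⁅X.fst, y⁆ = (0:L) := by simp [Holomorph.fst, add_comm] at h4; rw [add_comm]; exact h4
  have : X.snd y = -⁅X.fst, y⁆ := eq_neg_of_add_eq_zero_left h5
  simpa [LieDerivation.ad_apply_apply] using this
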